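/- arXiv:1201.5740 — 6 statements merged into one kernel-verified Lean document; each statement's English description precedes it below -/
import Mathlib

section
/- For every integer N ≥ 2, the function m ↦ Λ(m,N) is strictly decreasing on (0,∞). -/
/-- Derivative of the auxiliary function `u ↦ 2·arcsin u − (2u−3u³)/(1−u²)^{3/2}`. -/
lemma hderiv_aux (x : ℝ) (h0 : 0 < x) (h1 : x < 1) :
    HasDerivAt (fun u : ℝ => 2 * Real.arcsin u - (2*u - 3*u^3) / (Real.sqrt (1 - u^2))^3)
      (x^2 * (1 + 2*x^2) / (Real.sqrt (1 - x^2))^5) x := by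
  have hx2 : 0 < 1 - x^2 := by nlinarith
  set p := Real.sqrt (1 - x^2) with hpdef
  have hppos : 0 < p := Real.sqrt_pos.mpr hx2
  have hp2 : p^2 = 1 - x^2 := Real.sq_sqrt hx2.le
  have hinner : HasDerivAt (fun u : ℝ => 1 - u^2) (-(2*x)) x := by
    simpa using ((hasDerivAt_pow 2 x).const_sub 1)
  have hsq : HasDerivAt (fun u : ℝ => Real.sqrt (1 - u^2)) (-x/p) x := by
    have h := (Real.hasDerivAt_sqrt (ne_of_gt hx2)).comp x hinner
    refine h.congr_deriv (Eq.symm ?_)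
    field_simp
    ring
  have hcube : HasDerivAt (fun u : ℝ => (Real.sqrt (1 - u^2))^3) ((3:ℕ) * p^2 * (-x/p)) x :=
    hsq.pow 3
  have hnum : HasDerivAt (fun u : ℝ => 2*u - 3*u^3) (2 - 9*x^2) x := by
    have h := ((hasDerivAt_id x).const_mul 2).sub ((hasDerivAt_pow 3 x).const_mul 3)
    refine h.congr_deriv (Eq.symm ?_)
    simp; ring
  have hcube_ne : p^3 ≠ 0 := pow_ne_zero _ (ne_of_gt hppos)
  have hdiv := hnum.div hcube hcube_ne
  have harc := (Real.hasDerivAt_arcsin (by linarith) (ne_of_lt h1)).const_mul (2:ℝ)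
  have h := harc.sub hdiv
  refine h.congr_deriv (Eq.symm ?_)
  rw [← hpdef]
  field_simp
  ring_nf
  linear_combination (-7*x^2 - 2*p^2) * hp2

/-- Key inequality: `(2u−3u³)/(1−u²)^{3/2} < 2·arcsin u` on `(0,1)`. -/
lemma key_ineq (u : ℝ) (h0 : 0 < u) (h1 : u < 1) :
    (2*u - 3*u^3) / (Real.sqrt (1 - u^2))^3 < 2 * Real.arcsin u := by
  set h : ℝ → ℝ := fun u => 2 * Real.arcsin u - (2*u - 3*u^3) / (Real.sqrt (1 - u^2))^3 with hh
  have hcont : ContinuousOn h (Set.Ico 0 1) := by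
    apply ContinuousOn.sub
    · exact (continuous_const.mul Real.continuous_arcsin).continuousOn
    · apply ContinuousOn.div
      · fun_prop
      · fun_prop
      · intro x hx
        have : 0 < 1 - x^2 := by
          rcases hx with ⟨hx0, hx1⟩; nlinarith
        positivity
  have hmono : StrictMonoOn h (Set.Ico 0 1) := by
    apply strictMonoOn_of_deriv_pos (convex_Ico 0 1) hcont
    intro x hx
    rw [interior_Ico] at hx
    rw [(hderiv_aux x hx.1 hx.2).deriv]
    have hx2 : 0 < 1 - x^2 := by rcases hx with ⟨a,b⟩; nlinarith
    have hsp : 0 < Real.sqrt (1 - x^2) := Real.sqrt_pos.mpr hx2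
    have hx0 := hx.1
    positivity
  have := hmono (by constructor <;> norm_num) (⟨h0.le, h1⟩ : u ∈ Set.Ico 0 1) h0
  simp only [hh] at this
  simp at this
  linarith [this]

/-- The inequality in `m`-form: `2/s − 1/s³ < 2·arcsin(1/(m+1))` where `s = √(m(m+2))`. -/
lemma key_ineq' (m : ℝ) (hm : 0 < m) :
    2/Real.sqrt (m*(m+2)) - 1/(Real.sqrt (m*(m+2)))^3 < 2 * Real.arcsin (1/(m+1)) := by
  have hq0 : 0 < m*(m+2) := by nlinarith
  set s := Real.sqrt (m*(m+2)) with hsdef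
  have hs : 0 < s := Real.sqrt_pos.mpr hq0
  have hs2 : s^2 = m*(m+2) := Real.sq_sqrt hq0.le
  have hm1 : (0:ℝ) < m + 1 := by linarith
  have hu0 : (0:ℝ) < 1/(m+1) := by positivity
  have hu1 : 1/(m+1) < 1 := by rw [div_lt_one hm1]; linarith
  have hroot : Real.sqrt (1 - (1/(m+1))^2) = s/(m+1) := by
    have h1 : 1 - (1/(m+1))^2 = (m*(m+2))/(m+1)^2 := by field_simp; ring
    rw [h1, Real.sqrt_div' _ (by positivity), Real.sqrt_sq hm1.le]
  have hkey := key_ineq (1/(m+1)) hu0 hu1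
  rw [hroot] at hkey
  have heq : (2*(1/(m+1)) - 3*(1/(m+1))^3) / (s/(m+1))^3 = 2/s - 1/s^3 := by
    have h3 : s^3 = m*(m+2)*s := by rw [pow_succ, hs2]
    rw [div_pow s (m+1) 3, h3]
    field_simp
    ring
  rw [heq] at hkey
  exact hkey

/-- `Λ(m,N) = (2/π)·(N−1)·(m+1)²·[1/√(m(m+2)) − arcsin(1/(m+1))]`. -/
noncomputable def Lam (m : ℝ) (N : ℕ) : ℝ :=
  (2 / Real.pi) * ((N : ℝ) - 1) * (m + 1) ^ 2 *
    (1 / Real.sqrt (m * (m + 2)) - Real.arcsin (1 / (m + 1)))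

/-- Derivative of `Λ(·,N)` at `m > 0`. -/
lemma lam_deriv (N : ℕ) (m : ℝ) (hm : 0 < m) :
    HasDerivAt (fun m => Lam m N)
      ((2/Real.pi) * ((N:ℝ)-1) * ((m+1) *
        (2/Real.sqrt (m*(m+2)) - 2*Real.arcsin (1/(m+1)) - 1/(Real.sqrt (m*(m+2)))^3))) m := by
  have hq0 : 0 < m*(m+2) := by nlinarith
  set s := Real.sqrt (m*(m+2)) with hsdef
  have hs : 0 < s := Real.sqrt_pos.mpr hq0
  have hs2 : s^2 = m*(m+2) := Real.sq_sqrt hq0.le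
  have hm1 : (0:ℝ) < m + 1 := by linarith
  have hq : HasDerivAt (fun m : ℝ => m*(m+2)) (2*m+2) m := by
    have h := (hasDerivAt_id m).mul ((hasDerivAt_id m).add_const 2)
    refine h.congr_deriv (Eq.symm ?_)
    simp only [id_eq]; ring
  have hsd : HasDerivAt (fun m : ℝ => Real.sqrt (m*(m+2))) (1/(2*s) * (2*m+2)) m :=
    (Real.hasDerivAt_sqrt (ne_of_gt hq0)).comp m hq
  have hinvs : HasDerivAt (fun m : ℝ => 1 / Real.sqrt (m*(m+2)))
      (-(1/(2*s) * (2*m+2))/s^2) m := by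
    have h := hsd.inv (ne_of_gt hs)
    simp only [one_div] at h ⊢
    refine h.congr_deriv (Eq.symm ?_)
    rw [← hsdef]
  have hin : HasDerivAt (fun m : ℝ => 1/(m+1)) (-1/(m+1)^2) m := by
    have h := ((hasDerivAt_id m).add_const 1).inv (ne_of_gt hm1)
    simp only [one_div]
    exact h
  have hu0 : (0:ℝ) < 1/(m+1) := by positivity
  have hu1 : 1/(m+1) < 1 := by
    rw [div_lt_one hm1]; linarith
  have harc : HasDerivAt (fun m : ℝ => Real.arcsin (1/(m+1)))
      (1 / Real.sqrt (1 - (1/(m+1))^2) * (-1/(m+1)^2)) m :=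
    (Real.hasDerivAt_arcsin (by linarith) (ne_of_lt hu1)).comp (h := fun m : ℝ => 1/(m+1)) m hin
  have hp2 : HasDerivAt (fun m : ℝ => (m+1)^2) (2*(m+1)) m := by
    have h := ((hasDerivAt_id m).add_const 1).pow 2
    refine h.congr_deriv (Eq.symm ?_)
    simp
  have hprod := (hp2.mul (hinvs.sub harc)).const_mul ((2/Real.pi) * ((N:ℝ)-1))
  have hfun : (fun m => Lam m N) = fun m : ℝ =>
      ((2/Real.pi) * ((N:ℝ)-1)) * ((m+1)^2 * (1 / Real.sqrt (m*(m+2)) - Real.arcsin (1/(m+1)))) := by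
    funext x; simp only [Lam]; ring
  rw [hfun]
  refine hprod.congr_deriv (Eq.symm ?_)
  have hroot : Real.sqrt (1 - (1/(m+1))^2) = s/(m+1) := by
    have h1 : 1 - (1/(m+1))^2 = (m*(m+2))/(m+1)^2 := by field_simp; ring
    rw [h1, Real.sqrt_div' _ (by positivity), Real.sqrt_sq hm1.le]
  rw [hroot]
  have hm1' : (m:ℝ) + 1 ≠ 0 := ne_of_gt hm1
  have hM : (m*(m+2)) ≠ 0 := ne_of_gt hq0
  have hsimp : ∀ t A : ℝ, t ≠ 0 → t^2 = m*(m+2) →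
      2/Real.pi * ((N:ℝ)-1) * ((m+1) * (2/t - 2*A - 1/t^3)) =
      2/Real.pi * ((N:ℝ)-1) * (2*(m+1)*(1/t - A) +
        (m+1)^2 * (-(1/(2*t)*(2*m+2))/t^2 - 1/(t/(m+1)) * (-1/(m+1)^2))) := by
    intro t A ht ht2
    have h3 : t^3 = m*(m+2)*t := by rw [pow_succ, ht2]
    rw [h3, ht2]
    have hpi := Real.pi_ne_zero
    field_simp
    ring
  exact hsimp s (Real.arcsin (1/(m+1))) (ne_of_gt hs) hs2

/-- For every integer `N ≥ 2`, the function `m ↦ Λ(m,N)` is strictly decreasing on `(0,∞)`. -/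
theorem stmt0 (N : ℕ) (hN : 2 ≤ N) :
    StrictAntiOn (fun m : ℝ => Lam m N) (Set.Ioi 0) := by
  apply strictAntiOn_of_deriv_neg (convex_Ioi 0)
  · intro x hx
    exact (lam_deriv N x hx).differentiableAt.continuousAt.continuousWithinAt
  · intro x hx
    rw [interior_Ioi] at hx
    have hx0 : (0:ℝ) < x := hx
    rw [(lam_deriv N x hx0).deriv]
    have hN2 : (2:ℝ) ≤ (N:ℝ) := by exact_mod_cast hN
    have hc : 0 < (2/Real.pi) * ((N:ℝ)-1) := by
      apply mul_pos
      · positivity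
      · linarith
    have hb : 2/Real.sqrt (x*(x+2)) - 2*Real.arcsin (1/(x+1)) - 1/(Real.sqrt (x*(x+2)))^3 < 0 := by
      have := key_ineq' x hx0
      linarith
    exact mul_neg_of_pos_of_neg hc (mul_neg_of_pos_of_neg (by linarith) hb)
end

section
/- For every integer N ≥ 2, there exists a unique m > 0 such that Λ(m,N) = 1 (this unique root is denoted m*(N)); moreover, for m > 0, Λ(m,N) < 1 if and only if m > m*(N). -/
open Real Set Filter Topology


noncomputable def hfun (t : ℝ) : ℝ :=
  2 * Real.arcsin t⁻¹ - (2 * t ^ 2 - 3) / (Real.sqrt (t ^ 2 - 1)) ^ 3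

noncomputable def Gfun (t : ℝ) : ℝ :=
  t ^ 2 * ((Real.sqrt (t ^ 2 - 1))⁻¹ - Real.arcsin t⁻¹)

lemma s_pos {t : ℝ} (ht : 1 < t) : 0 < Real.sqrt (t ^ 2 - 1) :=
  Real.sqrt_pos.2 (by nlinarith)

lemma s_sq {t : ℝ} (ht : 1 < t) : (Real.sqrt (t ^ 2 - 1)) ^ 2 = t ^ 2 - 1 :=
  Real.sq_sqrt (by nlinarith)

lemma inv_mem {t : ℝ} (ht : 1 < t) : 0 < t⁻¹ ∧ t⁻¹ < 1 :=
  ⟨inv_pos.2 (by linarith), (inv_lt_one_iff₀).2 (Or.inr ht)⟩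

-- derivative of t ↦ arcsin t⁻¹ is -1/(t * √(t²-1))
lemma hasDerivAt_arcsin_inv {t : ℝ} (ht : 1 < t) :
    HasDerivAt (fun t : ℝ => Real.arcsin t⁻¹)
      (-(t * Real.sqrt (t ^ 2 - 1))⁻¹) t := by
  have ht0 : (0:ℝ) < t := by linarith
  have h1 : t⁻¹ ≠ -1 := by
    have := (inv_mem ht).1; intro h; linarith
  have h2 : t⁻¹ ≠ 1 := ne_of_lt (inv_mem ht).2
  have hd := (Real.hasDerivAt_arcsin h1 h2).comp t (hasDerivAt_inv ht0.ne')
  refine hd.congr_deriv ?_; symm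
  have hs := s_pos ht
  have h1t : Real.sqrt (1 - (t⁻¹) ^ 2) = Real.sqrt (t ^ 2 - 1) / t := by
    rw [show (1 - t⁻¹ ^ 2) = (t ^ 2 - 1) / t ^ 2 by field_simp,
      Real.sqrt_div (by nlinarith : (0:ℝ) ≤ t ^ 2 - 1), Real.sqrt_sq ht0.le]
  rw [h1t]
  field_simp

-- derivative of t ↦ √(t²-1) is t/√(t²-1)
lemma hasDerivAt_s {t : ℝ} (ht : 1 < t) :
    HasDerivAt (fun t : ℝ => Real.sqrt (t ^ 2 - 1))
      (t / Real.sqrt (t ^ 2 - 1)) t := by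
  have h : t ^ 2 - 1 ≠ 0 := by nlinarith
  have hd := (Real.hasDerivAt_sqrt h).comp t
    (((hasDerivAt_pow 2 t)).sub_const 1)
  refine hd.congr_deriv ?_; symm
  have hs := s_pos ht
  field_simp
  ring

lemma hasDerivAt_hfun {t : ℝ} (ht : 1 < t) :
    HasDerivAt hfun (-((t ^ 2 + 2) / (t * Real.sqrt (t ^ 2 - 1) ^ 5))) t := by
  have hs := s_pos ht
  have hs2 := s_sq ht
  have ht0 : (0:ℝ) < t := by linarith
  have hcube : HasDerivAt (fun t : ℝ => (Real.sqrt (t ^ 2 - 1)) ^ 3)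
      (3 * Real.sqrt (t ^ 2 - 1) ^ 2 * (t / Real.sqrt (t ^ 2 - 1))) t :=
    (hasDerivAt_s ht).pow 3 |>.congr_deriv (by ring)
  have hnum : HasDerivAt (fun t : ℝ => 2 * t ^ 2 - 3) (2 * (2 * t)) t := by
    simpa using ((hasDerivAt_pow 2 t).const_mul 2).sub_const 3
  have hq : HasDerivAt (fun t : ℝ => (2 * t ^ 2 - 3) / (Real.sqrt (t ^ 2 - 1)) ^ 3)
      ((2 * (2 * t) * (Real.sqrt (t ^ 2 - 1)) ^ 3 -
        (2 * t ^ 2 - 3) * (3 * Real.sqrt (t ^ 2 - 1) ^ 2 * (t / Real.sqrt (t ^ 2 - 1)))) /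
        ((Real.sqrt (t ^ 2 - 1)) ^ 3) ^ 2) t :=
    hnum.div hcube (by positivity)
  have harc : HasDerivAt (fun t : ℝ => 2 * Real.arcsin t⁻¹)
      (2 * -(t * Real.sqrt (t ^ 2 - 1))⁻¹) t := (hasDerivAt_arcsin_inv ht).const_mul 2
  have := harc.sub hq
  refine this.congr_deriv ?_; symm
  have e5 : Real.sqrt (t ^ 2 - 1) ^ 5 = (t^2-1)^2 * Real.sqrt (t ^ 2 - 1) := by
    rw [show (5:ℕ) = 2*2+1 by norm_num, pow_succ, pow_mul, hs2]
  set S := Real.sqrt (t ^ 2 - 1) with hSdef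
  have hS0 : S ≠ 0 := hs.ne'
  field_simp
  linear_combination (2*S^2+6*t^2-2) * hs2

lemma hasDerivAt_Gfun {t : ℝ} (ht : 1 < t) :
    HasDerivAt Gfun (-(t * hfun t)) t := by
  have hs := s_pos ht
  have hs2 := s_sq ht
  have ht0 : (0:ℝ) < t := by linarith
  have hinv : HasDerivAt (fun t : ℝ => (Real.sqrt (t ^ 2 - 1))⁻¹)
      (-(t / Real.sqrt (t ^ 2 - 1)) / (Real.sqrt (t ^ 2 - 1)) ^ 2) t :=
    (hasDerivAt_s ht).inv hs.ne'
  have hb := hinv.sub (hasDerivAt_arcsin_inv ht)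
  have hd := (hasDerivAt_pow 2 t).mul hb
  unfold Gfun
  refine hd.congr_deriv ?_; symm
  unfold hfun
  set S := Real.sqrt (t ^ 2 - 1) with hSdef
  have hS0 : S ≠ 0 := hs.ne'
  simp only [Pi.sub_apply]
  field_simp
  linear_combination (-3*t) * hs2 + (-2*t*S^2) * mul_inv_cancel₀ hS0

lemma hfun_anti : StrictAntiOn hfun (Ioi 1) := by
  apply strictAntiOn_of_deriv_neg (convex_Ioi 1)
  · intro t ht
    exact (hasDerivAt_hfun ht).continuousAt.continuousWithinAt
  · intro t ht
    rw [interior_Ioi] at ht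
    have ht1 : (1:ℝ) < t := ht
    rw [(hasDerivAt_hfun ht1).deriv]
    have hs := s_pos ht1
    have ht0 : (0:ℝ) < t := by linarith
    have : 0 < (t ^ 2 + 2) / (t * Real.sqrt (t ^ 2 - 1) ^ 5) := by positivity
    linarith

lemma hfun_tendsto : Tendsto hfun atTop (nhds 0) := by
  have h1 : Tendsto (fun t : ℝ => 2 * Real.arcsin t⁻¹) atTop (nhds 0) := by
    have : Tendsto (fun t : ℝ => t⁻¹) atTop (nhds 0) := tendsto_inv_atTop_zero
    have harc := (Real.continuous_arcsin.tendsto 0).comp this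
    rw [Real.arcsin_zero] at harc
    simpa using harc.const_mul 2
  have h2 : Tendsto (fun t : ℝ => (2 * t ^ 2 - 3) / (Real.sqrt (t ^ 2 - 1)) ^ 3) atTop (nhds 0) := by
    have hsq : Tendsto (fun t : ℝ => Real.sqrt (t ^ 2 - 1)) atTop atTop := by
      apply tendsto_atTop_mono' atTop
        (show ∀ᶠ t : ℝ in atTop, t - 1 ≤ Real.sqrt (t ^ 2 - 1) from ?_)
        (tendsto_atTop_add_const_right _ (-1) tendsto_id)
      filter_upwards [eventually_ge_atTop (1:ℝ)] with t ht1
      calc t - 1 = Real.sqrt ((t - 1) ^ 2) := (Real.sqrt_sq (by linarith)).symm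
      _ ≤ Real.sqrt (t ^ 2 - 1) := Real.sqrt_le_sqrt (by nlinarith)
    have hinv : Tendsto (fun t : ℝ => 3 / Real.sqrt (t ^ 2 - 1)) atTop (nhds 0) := by
      simpa [div_eq_mul_inv] using hsq.inv_tendsto_atTop.const_mul (3:ℝ)
    apply squeeze_zero' (g := fun t : ℝ => 3 / Real.sqrt (t ^ 2 - 1)) ?_ ?_ hinv
    · filter_upwards [eventually_ge_atTop (2:ℝ)] with t ht2
      have ht : (1:ℝ) < t := by linarith
      have hs := s_pos ht
      apply div_nonneg (by nlinarith) (by positivity)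
    · filter_upwards [eventually_ge_atTop (2:ℝ)] with t ht2
      have ht : (1:ℝ) < t := by linarith
      have hs := s_pos ht
      have hs2 := s_sq ht
      rw [div_le_div_iff₀ (by positivity) hs]
      nlinarith [hs2, hs]
  have := h1.sub h2
  rw [sub_zero] at this; exact this

lemma hfun_pos {t : ℝ} (ht : 1 < t) : 0 < hfun t := by
  have h1 : hfun (t + 1) ≤ 0 + hfun (t + 1) := by linarith
  have hge : 0 ≤ hfun (t + 1) := by
    apply le_of_tendsto hfun_tendsto
    filter_upwards [eventually_ge_atTop (t + 1)] with x hx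
    rcases eq_or_lt_of_le hx with h | h
    · rw [h]
    · exact le_of_lt (hfun_anti (by simp; linarith) (by simp; linarith) h)
  have := hfun_anti (mem_Ioi.2 ht) (mem_Ioi.2 (by linarith : (1:ℝ) < t + 1)) (by linarith)
  linarith

lemma Gfun_anti : StrictAntiOn Gfun (Ioi 1) := by
  apply strictAntiOn_of_deriv_neg (convex_Ioi 1)
  · intro t ht
    exact (hasDerivAt_Gfun ht).continuousAt.continuousWithinAt
  · intro t ht
    rw [interior_Ioi] at ht
    rw [(hasDerivAt_Gfun ht).deriv]
    have := hfun_pos ht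
    have ht0 : (0:ℝ) < t := by linarith [mem_Ioi.1 ht]
    nlinarith

lemma arcsin_inv_lt {t : ℝ} (ht : 1 < t) :
    Real.arcsin t⁻¹ < (Real.sqrt (t ^ 2 - 1))⁻¹ := by
  have ht0 : (0:ℝ) < t := by linarith
  have hx := inv_mem ht
  set θ := Real.arcsin t⁻¹ with hθ
  have hθ0 : 0 < θ := Real.arcsin_pos.2 hx.1
  have hθπ : θ < π / 2 := Real.arcsin_lt_pi_div_two.2 hx.2
  have htan := Real.lt_tan hθ0 hθπ
  have hsin : Real.sin θ = t⁻¹ := Real.sin_arcsin (by linarith [hx.1]) hx.2.le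
  have hcos : Real.cos θ = Real.sqrt (t ^ 2 - 1) / t := by
    rw [hθ, Real.cos_arcsin]
    rw [show (1 - t⁻¹ ^ 2) = (t ^ 2 - 1) / t ^ 2 by field_simp,
      Real.sqrt_div (by nlinarith : (0:ℝ) ≤ t ^ 2 - 1), Real.sqrt_sq ht0.le]
  have hs := s_pos ht
  rw [Real.tan_eq_sin_div_cos, hsin, hcos] at htan
  calc θ < t⁻¹ / (Real.sqrt (t ^ 2 - 1) / t) := htan
  _ = (Real.sqrt (t ^ 2 - 1))⁻¹ := by field_simp

lemma le_arcsin {x : ℝ} (h0 : 0 ≤ x) (h1 : x ≤ 1) : x ≤ Real.arcsin x := by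
  rcases eq_or_lt_of_le h0 with h | h
  · simp [← h]
  · have hlt := Real.sin_lt (Real.arcsin_pos.2 h)
    rw [Real.sin_arcsin (by linarith) h1] at hlt
    exact hlt.le

lemma Gfun_pos {t : ℝ} (ht : 1 < t) : 0 < Gfun t := by
  have h := arcsin_inv_lt ht
  have ht0 : (0:ℝ) < t := by linarith
  unfold Gfun
  have := mul_pos (pow_pos ht0 2) (sub_pos.2 h)
  linarith

lemma Gfun_le {t : ℝ} (ht : 2 ≤ t) : Gfun t ≤ t⁻¹ := by
  have ht1 : (1:ℝ) < t := by linarith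
  have ht0 : (0:ℝ) < t := by linarith
  have hs := s_pos ht1
  have hs2 := s_sq ht1
  have hx := inv_mem ht1
  have h1 : (Real.sqrt (t ^ 2 - 1))⁻¹ ≤ (t ^ 2 + 1) / t ^ 3 := by
    have key : t ^ 3 / (t ^ 2 + 1) ≤ Real.sqrt (t ^ 2 - 1) :=
      (Real.le_sqrt (by positivity) (by nlinarith)).2
        (by rw [div_pow, div_le_iff₀ (by positivity)]; nlinarith)
    have := inv_anti₀ (by positivity) key
    rwa [inv_div] at this
  have h2 : t⁻¹ ≤ Real.arcsin t⁻¹ := le_arcsin hx.1.le hx.2.le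
  have h3 : Gfun t ≤ t ^ 2 * ((t ^ 2 + 1) / t ^ 3 - t⁻¹) := by
    unfold Gfun
    apply mul_le_mul_of_nonneg_left (by linarith) (by positivity)
  calc Gfun t ≤ t ^ 2 * ((t ^ 2 + 1) / t ^ 3 - t⁻¹) := h3
  _ = t⁻¹ := by field_simp; ring

lemma Gfun_big : (6:ℝ) ≤ Gfun (1/200 + 1 : ℝ) := by
  set t : ℝ := 1/200 + 1 with hT
  have ht : (1:ℝ) < t := by norm_num
  have hs := s_pos ht
  have hs2 := s_sq ht
  have hSle : Real.sqrt (t ^ 2 - 1) ≤ 1/8 := by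
    rw [show (1/8 : ℝ) = Real.sqrt ((1/8)^2) by rw [Real.sqrt_sq]; norm_num]
    apply Real.sqrt_le_sqrt
    norm_num [hT]
  have hSinv : (8:ℝ) ≤ (Real.sqrt (t ^ 2 - 1))⁻¹ := by
    have := inv_anti₀ hs hSle
    simpa using this
  have harc : Real.arcsin t⁻¹ ≤ Real.pi / 2 := Real.arcsin_le_pi_div_two _
  have hpi : Real.pi < 3.15 := Real.pi_lt_d2
  have hB : (6:ℝ) ≤ (Real.sqrt (t ^ 2 - 1))⁻¹ - Real.arcsin t⁻¹ := by linarith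
  have ht2 : (1:ℝ) ≤ t ^ 2 := by norm_num
  unfold Gfun
  nlinarith

lemma Lam_eq (m : ℝ) (N : ℕ) :
    Lam m N = 2 / Real.pi * ((N:ℝ) - 1) * Gfun (m + 1) := by
  unfold Lam Gfun
  rw [show (m + 1) ^ 2 - 1 = m * (m + 2) by ring, one_div, one_div]
  ring

/-- For every integer `N ≥ 2`, there exists a unique `m > 0` with `Λ(m,N) = 1`
(denoted `m*(N)`); moreover, for `m > 0`, `Λ(m,N) < 1` if and only if `m > m*(N)`. -/
theorem stmt2 (N : ℕ) (hN : 2 ≤ N) :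
    (∃! m : ℝ, 0 < m ∧ Lam m N = 1) ∧
    (∀ mstar : ℝ, 0 < mstar → Lam mstar N = 1 →
      ∀ m : ℝ, 0 < m → (Lam m N < 1 ↔ mstar < m)) := by
  have hN2 : (2:ℝ) ≤ (N:ℝ) := by exact_mod_cast hN
  have hpi := Real.pi_pos
  have hpi4 : Real.pi < 3.15 := Real.pi_lt_d2
  have hCpos : 0 < 2 / Real.pi * ((N:ℝ) - 1) := by
    apply mul_pos (by positivity)
    linarith
  have hanti : StrictAntiOn (fun m => Lam m N) (Ioi 0) := by
    intro x hx y hy hxy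
    have hx0 : (0:ℝ) < x := hx
    have hy0 : (0:ℝ) < y := hy
    simp only [Lam_eq]
    exact mul_lt_mul_of_pos_left
      (Gfun_anti (mem_Ioi.2 (by linarith)) (mem_Ioi.2 (by linarith)) (by linarith)) hCpos
  have hvalN : Lam (N:ℝ) N < 1 := by
    rw [Lam_eq]
    have hle : Gfun ((N:ℝ) + 1) ≤ ((N:ℝ) + 1)⁻¹ := Gfun_le (by linarith)
    calc 2 / Real.pi * ((N:ℝ) - 1) * Gfun ((N:ℝ) + 1)
        ≤ 2 / Real.pi * ((N:ℝ) - 1) * ((N:ℝ) + 1)⁻¹ :=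
          mul_le_mul_of_nonneg_left hle hCpos.le
    _ = 2 * ((N:ℝ) - 1) / (Real.pi * ((N:ℝ) + 1)) := by
          field_simp
    _ < 1 := by
          rw [div_lt_one (by positivity)]
          have hpi3 : 3 < Real.pi := Real.pi_gt_three
          nlinarith
  have hvala : 1 < Lam (1/200 : ℝ) N := by
    rw [Lam_eq]
    have h6 := Gfun_big
    calc (1:ℝ) < 2 / Real.pi * 1 * 6 := by
          rw [show 2 / Real.pi * 1 * 6 = 12 / Real.pi by ring, lt_div_iff₀ hpi]
          linarith
    _ ≤ 2 / Real.pi * ((N:ℝ) - 1) * 6 := by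
          apply mul_le_mul_of_nonneg_right _ (by norm_num)
          apply mul_le_mul_of_nonneg_left (by linarith) (by positivity)
    _ ≤ 2 / Real.pi * ((N:ℝ) - 1) * Gfun (1/200 + 1 : ℝ) :=
          mul_le_mul_of_nonneg_left h6 hCpos.le
  have hcont : ContinuousOn (fun m => Lam m N) (Icc (1/200 : ℝ) (N:ℝ)) := by
    have heq : (fun m => Lam m N) = fun m => 2 / Real.pi * ((N:ℝ) - 1) * Gfun (m + 1) :=
      funext fun m => Lam_eq m N
    rw [heq]
    intro m hm
    have hm0 : (1/200 : ℝ) ≤ m := hm.1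
    apply ContinuousAt.continuousWithinAt
    have hadd : ContinuousAt (fun x : ℝ => x + 1) m := by fun_prop
    have hGm : ContinuousAt Gfun (m + 1) :=
      (hasDerivAt_Gfun (show (1:ℝ) < m + 1 by linarith)).continuousAt
    have hcomp : ContinuousAt (fun x : ℝ => Gfun (x + 1)) m := ContinuousAt.comp (x := m) (f := fun x : ℝ => x + 1) hGm hadd
    exact hcomp.const_mul _
  have h1N : (1/200 : ℝ) ≤ (N:ℝ) := by linarith
  obtain ⟨m, hmIcc, hm1⟩ := intermediate_value_Icc' h1N hcont
    (show (1:ℝ) ∈ Icc (Lam (N:ℝ) N) (Lam (1/200 : ℝ) N) from ⟨hvalN.le, hvala.le⟩)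
  have hm0 : (0:ℝ) < m := lt_of_lt_of_le (by norm_num) hmIcc.1
  refine ⟨⟨m, ⟨hm0, hm1⟩, ?_⟩, ?_⟩
  · rintro y ⟨hy0, hy1⟩
    have hm1' : Lam m N = 1 := hm1
    exact hanti.injOn (mem_Ioi.2 hy0) (mem_Ioi.2 hm0)
      (show Lam y N = Lam m N from hy1.trans hm1'.symm)
  · intro mstar h0 h1 x hx
    rw [← h1]
    exact hanti.lt_iff_gt (mem_Ioi.2 hx) (mem_Ioi.2 h0)
end

section
/- Let N ≥ 2 be an integer, m > 0, and set θ := arctan(√(1+2/m)), so that θ ∈ (π/4, π/2). Then Λ(m,N) = 1 if and only if cot(2θ) + 2θ − (π/2)·(1 − cos²(2θ)/(N−1)) = 0. -/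
lemma alg_aux (p K M r a : ℝ) (hp : p ≠ 0) (hK : K ≠ 0) (hM : M ≠ 0) (hr : r ≠ 0) :
    -1 / M / (r / M) + (a + p / 2) - p / 2 * (1 - (-1 / M) ^ 2 / K)
      = p / (2 * K * M ^ 2) * (1 - 2 / p * K * M ^ 2 * (1 / r - a)) := by
  field_simp
  ring

/-- Let `N ≥ 2`, `m > 0` and `θ := arctan √(1+2/m)`.  Then `θ ∈ (π/4, π/2)` and
`Λ(m,N) = 1` iff `cot(2θ) + 2θ − (π/2)(1 − cos²(2θ)/(N−1)) = 0`. -/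
theorem stmt3 (N : ℕ) (hN : 2 ≤ N) (m : ℝ) (hm : 0 < m)
    (θ : ℝ) (hθ : θ = Real.arctan (Real.sqrt (1 + 2 / m))) :
    θ ∈ Set.Ioo (Real.pi / 4) (Real.pi / 2) ∧
    (Lam m N = 1 ↔
      Real.cos (2 * θ) / Real.sin (2 * θ) + 2 * θ
        - (Real.pi / 2) * (1 - Real.cos (2 * θ) ^ 2 / ((N : ℝ) - 1)) = 0) := by
  have hm1 : (0:ℝ) < m + 1 := by linarith
  have hpi := Real.pi_pos
  set s := Real.sqrt (1 + 2 / m) with hs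
  have hx0 : (0:ℝ) ≤ 1 + 2 / m := by positivity
  have hx2 : s ^ 2 = 1 + 2 / m := Real.sq_sqrt hx0
  have hs0 : 0 ≤ s := Real.sqrt_nonneg _
  have h2m : 0 < 2 / m := by positivity
  have hmm : m * (2 / m) = 2 := by field_simp
  have hs1 : 1 < s := by nlinarith
  have hθlt : θ < Real.pi / 2 := hθ ▸ Real.arctan_lt_pi_div_two s
  have hθgt : Real.pi / 4 < θ := by
    rw [hθ, ← Real.arctan_one]
    exact Real.arctan_strictMono hs1
  have hθpos : 0 < θ := lt_trans (by positivity) hθgt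
  refine ⟨⟨hθgt, hθlt⟩, ?_⟩
  have hcosθ : Real.cos θ = 1 / Real.sqrt (1 + s ^ 2) := hθ ▸ Real.cos_arctan s
  have hsinθ : Real.sin θ = s / Real.sqrt (1 + s ^ 2) := hθ ▸ Real.sin_arctan s
  have hq0 : (0:ℝ) < 1 + s ^ 2 := by nlinarith
  have hq : Real.sqrt (1 + s ^ 2) ^ 2 = 1 + s ^ 2 := Real.sq_sqrt hq0.le
  have hqpos : 0 < Real.sqrt (1 + s ^ 2) := Real.sqrt_pos.mpr hq0
  have hcos2 : Real.cos θ ^ 2 = 1 / (1 + s ^ 2) := by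
    rw [hcosθ, div_pow, one_pow, hq]
  -- cos 2θ = -1/(m+1)
  have hc : Real.cos (2 * θ) = -1 / (m + 1) := by
    rw [Real.cos_two_mul, hcos2, hx2]
    rw [show 1 + (1 + 2 / m) = 2 * (m + 1) / m by field_simp; ring]
    field_simp
    ring
  -- √(m(m+2)) = m s
  have hr : Real.sqrt (m * (m + 2)) = m * s := by
    rw [show m * (m + 2) = (m * s) ^ 2 by nlinarith [hx2, hmm]]
    exact Real.sqrt_sq (by positivity)
  have hms : 0 < m * s := by nlinarith
  -- sin 2θ = m s / (m+1)
  have hsin2 : Real.sin (2 * θ) = m * s / (m + 1) := by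
    rw [Real.sin_two_mul, hsinθ, hcosθ]
    have hqq : Real.sqrt (1 + s ^ 2) * Real.sqrt (1 + s ^ 2) = 1 + s ^ 2 :=
      Real.mul_self_sqrt hq0.le
    field_simp
    linear_combination -m * hx2 - hmm - m * hq
  -- 2θ = arcsin(1/(m+1)) + π/2
  have ha : Real.arcsin (1 / (m + 1)) = 2 * θ - Real.pi / 2 := by
    rw [show (1:ℝ) / (m + 1) = Real.sin (2 * θ - Real.pi / 2) by
      rw [Real.sin_sub_pi_div_two, hc]; ring]
    exact Real.arcsin_sin (by linarith) (by linarith)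
  have hKpos : (0:ℝ) < (N : ℝ) - 1 := by
    have : (2:ℝ) ≤ (N : ℝ) := by exact_mod_cast hN
    linarith
  have key : Real.cos (2 * θ) / Real.sin (2 * θ) + 2 * θ
        - (Real.pi / 2) * (1 - Real.cos (2 * θ) ^ 2 / ((N : ℝ) - 1))
      = (Real.pi / (2 * ((N : ℝ) - 1) * (m + 1) ^ 2)) * (1 - Lam m N) := by
    rw [hc, hsin2,
      show 2 * θ = Real.arcsin (1 / (m + 1)) + Real.pi / 2 by rw [ha]; ring]
    simp only [Lam]
    rw [hr]
    exact alg_aux Real.pi ((N : ℝ) - 1) (m + 1) (m * s) _ hpi.ne' hKpos.ne'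
      hm1.ne' hms.ne'
  rw [key]
  constructor
  · intro h; rw [h]; ring
  · intro h
    rcases mul_eq_zero.mp h with h1 | h1
    · exact absurd h1 (by positivity)
    · linarith
end

section
/- Let m > 0 and k ≥ 0. There exist sequences (aₙ)_{n≥0} and (bₙ)_{n≥0} of nonnegative real numbers such that for every y ∈ [−1, 1] the series ∑_{n≥0} aₙ yⁿ and ∑_{n≥0} bₙ yⁿ converge absolutely and sinh(k·arcsin(y/(m+1)))/√(1 − (y/(m+1))²) = ∑_{n≥0} aₙ yⁿ, cosh(k·arcsin(y/(m+1)))/√(1 − (y/(m+1))²) = ∑_{n≥0} bₙ yⁿ. -/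
set_option maxHeartbeats 1000000

open Real Set

namespace Stmt12Aux


/-- pair `(a n, a (n+1))` for the coefficient sequence of
`(α₀ cosh(k arcsin x) + π₀ sinh(k arcsin x))/√(1-x²)`. -/
noncomputable def auxSeq (k α₀ π₀ : ℝ) : ℕ → ℝ × ℝ
  | 0 => (α₀, k * π₀)
  | n + 1 => ((auxSeq k α₀ π₀ n).2,
      (((n : ℝ) + 1) ^ 2 + k ^ 2) / ((((n : ℝ)) + 1) * (((n : ℝ)) + 2)) * (auxSeq k α₀ π₀ n).1)

noncomputable def aseq (k α₀ π₀ : ℝ) (n : ℕ) : ℝ := (auxSeq k α₀ π₀ n).1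

noncomputable def pseq (k α₀ π₀ : ℝ) : ℕ → ℝ
  | 0 => π₀
  | n + 1 => k * aseq k α₀ π₀ n / ((n : ℝ) + 1)

variable {k α₀ π₀ : ℝ}

lemma aseq_zero : aseq k α₀ π₀ 0 = α₀ := rfl

lemma aseq_one : aseq k α₀ π₀ 1 = k * π₀ := rfl

lemma aseq_succ_succ (n : ℕ) :
    aseq k α₀ π₀ (n + 2) =
      (((n : ℝ) + 1) ^ 2 + k ^ 2) / ((((n : ℝ)) + 1) * (((n : ℝ)) + 2)) * aseq k α₀ π₀ n := by
  show (auxSeq k α₀ π₀ (n + 2)).1 = _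
  rw [auxSeq]
  show (auxSeq k α₀ π₀ (n + 1)).2 = _
  rw [auxSeq]
  rfl

lemma ratio_nonneg (hk : 0 ≤ k) (n : ℕ) :
    0 ≤ (((n : ℝ) + 1) ^ 2 + k ^ 2) / ((((n : ℝ)) + 1) * (((n : ℝ)) + 2)) := by
  positivity

lemma ratio_le (n : ℕ) :
    (((n : ℝ) + 1) ^ 2 + k ^ 2) / ((((n : ℝ)) + 1) * (((n : ℝ)) + 2)) ≤ 1 + k ^ 2 := by
  rw [div_le_iff₀ (by positivity)]
  have hn : (0 : ℝ) ≤ (n : ℝ) := Nat.cast_nonneg n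
  nlinarith [sq_nonneg k, hn]

lemma ratio_le_one {n : ℕ} (h : k ^ 2 ≤ (n : ℝ) + 1) :
    (((n : ℝ) + 1) ^ 2 + k ^ 2) / ((((n : ℝ)) + 1) * (((n : ℝ)) + 2)) ≤ 1 := by
  rw [div_le_one (by positivity)]
  have hn : (0 : ℝ) ≤ (n : ℝ) := Nat.cast_nonneg n
  nlinarith [hn]

lemma aseq_nonneg (hk : 0 ≤ k) (hα : 0 ≤ α₀) (hπ : 0 ≤ π₀) : ∀ n, 0 ≤ aseq k α₀ π₀ n := by
  have H : ∀ n, 0 ≤ aseq k α₀ π₀ n ∧ 0 ≤ aseq k α₀ π₀ (n + 1) := by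
    intro n
    induction n with
    | zero => exact ⟨hα, by rw [aseq_one]; positivity⟩
    | succ n ih =>
      refine ⟨ih.2, ?_⟩
      rw [aseq_succ_succ]
      exact mul_nonneg (ratio_nonneg hk n) ih.1
  exact fun n => (H n).1

lemma pseq_nonneg (hk : 0 ≤ k) (hα : 0 ≤ α₀) (hπ : 0 ≤ π₀) : ∀ n, 0 ≤ pseq k α₀ π₀ n := by
  intro n
  cases n with
  | zero => exact hπ
  | succ n =>
    show 0 ≤ k * aseq k α₀ π₀ n / ((n : ℝ) + 1)
    have := aseq_nonneg hk hα hπ n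
    positivity

lemma aseq_le_geom (hk : 0 ≤ k) (hα : 0 ≤ α₀) (hπ : 0 ≤ π₀) :
    ∀ n, aseq k α₀ π₀ n ≤ (max α₀ (k * π₀) + 1) * (1 + k ^ 2) ^ n := by
  set C := max α₀ (k * π₀) + 1 with hC
  have hC0 : 0 ≤ C := by positivity
  have hb : (1 : ℝ) ≤ 1 + k ^ 2 := by nlinarith [sq_nonneg k]
  have H : ∀ n, aseq k α₀ π₀ n ≤ C * (1 + k ^ 2) ^ n ∧
      aseq k α₀ π₀ (n + 1) ≤ C * (1 + k ^ 2) ^ (n + 1) := by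
    intro n
    induction n with
    | zero =>
      constructor
      · rw [aseq_zero]; simpa [hC] using le_trans (le_max_left α₀ (k * π₀)) (by nlinarith)
      · rw [aseq_one, pow_one]
        have h5 : k * π₀ ≤ C := le_trans (le_max_right α₀ (k * π₀)) (by simp [hC])
        nlinarith [mul_nonneg hC0 (sq_nonneg k)]
    | succ n ih =>
      refine ⟨ih.2, ?_⟩
      rw [aseq_succ_succ]
      have h1 := ratio_le (k := k) n
      have h2 := ratio_nonneg hk (n := n)
      have h3 := aseq_nonneg hk hα hπ n
      have h4 := ih.1
      calc (((n : ℝ) + 1) ^ 2 + k ^ 2) / ((((n : ℝ)) + 1) * (((n : ℝ)) + 2)) * aseq k α₀ π₀ n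
          ≤ (1 + k ^ 2) * (C * (1 + k ^ 2) ^ n) := by
            apply mul_le_mul h1 h4 h3 (by nlinarith)
        _ = C * (1 + k ^ 2) ^ (n + 1) := by ring
        _ ≤ C * (1 + k ^ 2) ^ (n + 2) :=
            mul_le_mul_of_nonneg_left (pow_le_pow_right₀ hb (by omega)) hC0
  exact fun n => (H n).1

lemma aseq_bounded (hk : 0 ≤ k) (hα : 0 ≤ α₀) (hπ : 0 ≤ π₀) :
    ∃ M : ℝ, 0 ≤ M ∧ ∀ n, aseq k α₀ π₀ n ≤ M := by
  obtain ⟨N, hN⟩ := exists_nat_ge (k ^ 2)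
  set C := max α₀ (k * π₀) + 1 with hC
  have hb : (1 : ℝ) ≤ 1 + k ^ 2 := by nlinarith [sq_nonneg k]
  refine ⟨C * (1 + k ^ 2) ^ (N + 2), by positivity, ?_⟩
  intro n
  induction n using Nat.strong_induction_on with
  | _ n ih =>
    rcases lt_or_ge n (N + 2) with h | h
    · calc aseq k α₀ π₀ n ≤ C * (1 + k ^ 2) ^ n := aseq_le_geom hk hα hπ n
        _ ≤ C * (1 + k ^ 2) ^ (N + 2) := by
            apply mul_le_mul_of_nonneg_left (pow_le_pow_right₀ hb h.le) (by positivity)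
    · obtain ⟨m, rfl⟩ : ∃ m, n = m + 2 := ⟨n - 2, by omega⟩
      have hm : N ≤ m := by omega
      have hratio : (((m : ℝ) + 1) ^ 2 + k ^ 2) / ((((m : ℝ)) + 1) * (((m : ℝ)) + 2)) ≤ 1 := by
        apply ratio_le_one
        calc k ^ 2 ≤ (N : ℝ) := hN
          _ ≤ (m : ℝ) + 1 := by exact_mod_cast le_trans (Nat.cast_le.2 hm) (by linarith)
      calc aseq k α₀ π₀ (m + 2)
          = (((m : ℝ) + 1) ^ 2 + k ^ 2) / ((((m : ℝ)) + 1) * (((m : ℝ)) + 2)) * aseq k α₀ π₀ m :=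
            aseq_succ_succ m
        _ ≤ 1 * aseq k α₀ π₀ m :=
            mul_le_mul_of_nonneg_right hratio (aseq_nonneg hk hα hπ m)
        _ = aseq k α₀ π₀ m := one_mul _
        _ ≤ C * (1 + k ^ 2) ^ (N + 2) := ih m (by omega)



lemma summable_pow_of_bounded {c : ℕ → ℝ} {M R : ℝ} (hM : ∀ n, |c n| ≤ M)
    (hR1 : R < 1) {x : ℝ} (hx : |x| ≤ R) : Summable fun n => c n * x ^ n := by
  have hR0 : 0 ≤ R := le_trans (abs_nonneg x) hx
  refine Summable.of_norm_bounded (g := fun n => M * R ^ n)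
    ((summable_geometric_of_lt_one hR0 hR1).mul_left M) ?_
  intro n
  rw [norm_mul, norm_pow]
  have h1 : ‖x‖ ^ n ≤ R ^ n := pow_le_pow_left₀ (norm_nonneg x) hx n
  have h2 : ‖c n‖ ≤ M := hM n
  exact mul_le_mul h2 h1 (by positivity) (le_trans (abs_nonneg _) h2)

lemma summable_deriv_bound {M R : ℝ} (hM : 0 ≤ M) (hR0 : 0 < R) (hR1 : R < 1) :
    Summable fun n : ℕ => M * ((n : ℝ) * R ^ (n - 1)) := by
  have h : Summable fun n : ℕ => (M / R) * ((n : ℝ) ^ 1 * R ^ n) :=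
    (summable_pow_mul_geometric_of_norm_lt_one (R := ℝ) 1 (by rwa [Real.norm_eq_abs, abs_of_pos hR0])).mul_left _
  refine h.congr fun n => ?_
  cases n with
  | zero => simp
  | succ n =>
    field_simp [pow_succ]
    rw [Nat.add_sub_cancel]
    ring

lemma hasDerivAt_tsum_pow {c : ℕ → ℝ} {M R : ℝ} (hM : ∀ n, |c n| ≤ M)
    (hR0 : 0 < R) (hR1 : R < 1) {x : ℝ} (hx : x ∈ Ioo (-R) R) :
    HasDerivAt (fun y => ∑' n, c n * y ^ n) (∑' n, c n * ((n : ℝ) * x ^ (n - 1))) x := by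
  have hM0 : 0 ≤ M := le_trans (abs_nonneg _) (hM 0)
  refine hasDerivAt_tsum_of_isPreconnected (summable_deriv_bound hM0 hR0 hR1)
    isOpen_Ioo (convex_Ioo _ _).isPreconnected
    (g := fun n y => c n * y ^ n) (g' := fun n y => c n * ((n : ℝ) * y ^ (n - 1)))
    (y₀ := 0)
    (fun n y _ => (hasDerivAt_pow n y).const_mul (c n)) ?_ ?_ ?_ hx
  · intro n y hy
    rw [Real.norm_eq_abs, abs_mul, abs_mul]
    have hyR : |y| ≤ R := by
      rw [abs_le]; exact ⟨hy.1.le, hy.2.le⟩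
    have : |y ^ (n-1)| ≤ R ^ (n-1) := by
      rw [abs_pow]; exact pow_le_pow_left₀ (abs_nonneg y) hyR _
    have hn : |(n : ℝ)| = (n : ℝ) := abs_of_nonneg (Nat.cast_nonneg n)
    rw [hn]
    exact mul_le_mul (hM n) (mul_le_mul_of_nonneg_left this (Nat.cast_nonneg n))
      (by positivity) hM0
  · constructor <;> simp [hR0]
  · apply summable_pow_of_bounded hM hR1 (x := 0)
    simp [hR0.le]


lemma pseq_zero' {k α₀ π₀ : ℝ} : pseq k α₀ π₀ 0 = π₀ := rfl
lemma pseq_succ {k α₀ π₀ : ℝ} (n : ℕ) :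
    pseq k α₀ π₀ (n + 1) = k * aseq k α₀ π₀ n / ((n : ℝ) + 1) := rfl
-- new material
lemma hasSum_shift {f : ℕ → ℝ} {S : ℝ} (h : HasSum f S) (j : ℕ) :
    HasSum (fun n => f (n + j)) (S - ∑ i ∈ Finset.range j, f i) := by
  rw [hasSum_nat_add_iff j]
  simpa using h

lemma relation_P {x : ℝ}
    (hsa : Summable fun n => aseq k α₀ π₀ n * x ^ n)
    (hsp' : Summable fun n => pseq k α₀ π₀ n * ((n : ℝ) * x ^ (n - 1))) :
    (∑' n, pseq k α₀ π₀ n * ((n : ℝ) * x ^ (n - 1))) = k * ∑' n, aseq k α₀ π₀ n * x ^ n := by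
  have h0 := hasSum_shift hsp'.hasSum 1
  have hval : (fun n : ℕ => pseq k α₀ π₀ (n + 1) * (((n + 1 : ℕ) : ℝ) * x ^ (n + 1 - 1)))
      = fun n : ℕ => k * (aseq k α₀ π₀ n * x ^ n) := by
    funext n
    rw [pseq_succ]
    have hn : ((n : ℝ) + 1) ≠ 0 := by positivity
    push_cast
    field_simp
  rw [hval] at h0
  have h2 : HasSum (fun n : ℕ => k * (aseq k α₀ π₀ n * x ^ n))
      (k * ∑' n, aseq k α₀ π₀ n * x ^ n) := hsa.hasSum.mul_left k
  have := h0.unique h2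
  simp only [Finset.range_one, Finset.sum_singleton] at this
  simp at this
  linarith

lemma relation_A (hk : 0 ≤ k) {x : ℝ}
    (hsa : Summable fun n => aseq k α₀ π₀ n * x ^ n)
    (hsp : Summable fun n => pseq k α₀ π₀ n * x ^ n)
    (hsa' : Summable fun n => aseq k α₀ π₀ n * ((n : ℝ) * x ^ (n - 1))) :
    (1 - x ^ 2) * (∑' n, aseq k α₀ π₀ n * ((n : ℝ) * x ^ (n - 1)))
      = x * (∑' n, aseq k α₀ π₀ n * x ^ n) + k * (∑' n, pseq k α₀ π₀ n * x ^ n) := by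
  set a : ℕ → ℝ := aseq k α₀ π₀ with ha
  set p : ℕ → ℝ := pseq k α₀ π₀ with hp
  set DA : ℝ := ∑' n, a n * ((n : ℝ) * x ^ (n - 1)) with hDA
  set FA : ℝ := ∑' n, a n * x ^ n with hFA
  set FP : ℝ := ∑' n, p n * x ^ n with hFP
  -- shifted derivative series
  have h1 : HasSum (fun n : ℕ => a (n + 1) * (((n : ℝ) + 1) * x ^ n)) DA := by
    have h0 := hasSum_shift hsa'.hasSum 1
    have hval : (fun n : ℕ => a (n + 1) * (((n + 1 : ℕ) : ℝ) * x ^ (n + 1 - 1)))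
        = fun n : ℕ => a (n + 1) * (((n : ℝ) + 1) * x ^ n) := by
      funext n; push_cast; ring
    rw [hval] at h0
    simpa using h0
  -- pieces of the right-hand side
  have hA : HasSum (fun n : ℕ => a (n + 1) * (((n : ℝ) + 1) * x ^ n) * x ^ 2) (DA * x ^ 2) :=
    h1.mul_right (x ^ 2)
  have hB0 : HasSum (fun n : ℕ => a n * x ^ n * x) (FA * x) := hsa.hasSum.mul_right x
  have hB := hasSum_shift hB0 1
  have hC0 : HasSum (fun n : ℕ => p n * x ^ n * k) (FP * k) := hsp.hasSum.mul_right k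
  have hC := hasSum_shift hC0 2
  -- the combined RHS sum
  have hRHS := (hA.add hB).add hC
  -- the shifted LHS sum
  have hL := hasSum_shift h1 2
  -- termwise equality
  have hterm : (fun n : ℕ => a (n + 1) * (((n : ℝ) + 1) * x ^ n) * x ^ 2
        + a (n + 1) * x ^ (n + 1) * x + p (n + 2) * x ^ (n + 2) * k)
      = fun n : ℕ => a (n + 2 + 1) * ((((n + 2 : ℕ)) : ℝ) + 1) * x ^ (n + 2) := by
    funext n
    have e0 : n + 2 + 1 = n + 1 + 2 := by omega
    rw [e0, ha, hp, aseq_succ_succ (n + 1), pseq_succ (n + 1)]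
    have h2 : ((n : ℝ) + 2) ≠ 0 := by positivity
    have h3 : ((n : ℝ) + 3) ≠ 0 := by positivity
    push_cast
    field_simp
    ring
  -- combine: align hRHS with hterm
  have hRHS' : HasSum (fun n : ℕ => a (n + 2 + 1) * ((((n + 2 : ℕ)) : ℝ) + 1) * x ^ (n + 2))
      (DA * x ^ 2 + (FA * x - ∑ i ∈ Finset.range 1, a i * x ^ i * x)
        + (FP * k - ∑ i ∈ Finset.range 2, p i * x ^ i * k)) := by
    rw [← hterm]
    convert hRHS using 2 with n
  have hL' : HasSum (fun n : ℕ => a (n + 2 + 1) * ((((n + 2 : ℕ)) : ℝ) + 1) * x ^ (n + 2))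
      (DA - ∑ i ∈ Finset.range 2, a (i + 1) * (((i : ℝ) + 1) * x ^ i)) := by
    convert hasSum_shift h1 2 using 2 with n
    ring
  have huniq := hL'.unique hRHS'
  simp only [Finset.sum_range_succ, Finset.sum_range_zero] at huniq
  have ha0 : a 0 = α₀ := rfl
  have ha1 : a 1 = k * π₀ := rfl
  have ha2 : a 2 = (1 + k ^ 2) / 2 * α₀ := by
    rw [ha, aseq_succ_succ 0, aseq_zero]; push_cast; ring
  have hp0 : p 0 = π₀ := rfl
  have hp1 : p 1 = k * α₀ := by
    rw [hp, pseq_succ 0, aseq_zero]; push_cast; ring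
  norm_num at huniq
  rw [ha0, ha1, ha2, hp0, hp1] at huniq
  linear_combination huniq


lemma summable_deriv_pow_of_bounded {c : ℕ → ℝ} {M R x : ℝ} (hM : ∀ n, |c n| ≤ M)
    (hR0 : 0 < R) (hR1 : R < 1) (hx : |x| ≤ R) :
    Summable fun n => c n * ((n : ℝ) * x ^ (n - 1)) := by
  have hM0 : 0 ≤ M := le_trans (abs_nonneg _) (hM 0)
  refine Summable.of_norm_bounded (summable_deriv_bound hM0 hR0 hR1) ?_
  intro n
  rw [Real.norm_eq_abs, abs_mul, abs_mul]
  have h1 : |x ^ (n - 1)| ≤ R ^ (n - 1) := by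
    rw [abs_pow]; exact pow_le_pow_left₀ (abs_nonneg x) hx _
  have hn : |(n : ℝ)| = (n : ℝ) := abs_of_nonneg (Nat.cast_nonneg n)
  rw [hn]
  exact mul_le_mul (hM n) (mul_le_mul_of_nonneg_left h1 (Nat.cast_nonneg n))
    (by positivity) hM0

lemma pseq_abs_le {k α₀ π₀ M : ℝ} (hk : 0 ≤ k) (hα : 0 ≤ α₀) (hπ : 0 ≤ π₀)
    (hM : ∀ n, aseq k α₀ π₀ n ≤ M) :
    ∀ n, |pseq k α₀ π₀ n| ≤ max π₀ (k * M) := by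
  intro n
  rw [abs_of_nonneg (pseq_nonneg hk hα hπ n)]
  cases n with
  | zero => exact le_max_left _ _
  | succ n =>
    rw [pseq_succ]
    refine le_trans ?_ (le_max_right _ _)
    have h1 : (1 : ℝ) ≤ (n : ℝ) + 1 := by
      have := Nat.cast_nonneg (α := ℝ) n; linarith
    have h2 : 0 ≤ aseq k α₀ π₀ n := aseq_nonneg hk hα hπ n
    calc k * aseq k α₀ π₀ n / ((n : ℝ) + 1) ≤ k * aseq k α₀ π₀ n :=
          div_le_self (by positivity) h1
      _ ≤ k * M := mul_le_mul_of_nonneg_left (hM n) hk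

lemma aseq_abs_le {k α₀ π₀ M : ℝ} (hk : 0 ≤ k) (hα : 0 ≤ α₀) (hπ : 0 ≤ π₀)
    (hM : ∀ n, aseq k α₀ π₀ n ≤ M) : ∀ n, |aseq k α₀ π₀ n| ≤ M := fun n => by
  rw [abs_of_nonneg (aseq_nonneg hk hα hπ n)]; exact hM n

lemma main (k α₀ π₀ r : ℝ) (hk : 0 ≤ k) (hα : 0 ≤ α₀) (hπ : 0 ≤ π₀)
    (hr0 : 0 < r) (hr1 : r < 1) :
    ∀ x ∈ Icc (-r) r,
      HasSum (fun n => aseq k α₀ π₀ n * x ^ n)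
        ((α₀ * Real.cosh (k * Real.arcsin x) + π₀ * Real.sinh (k * Real.arcsin x)) /
          Real.sqrt (1 - x ^ 2)) := by
  -- radii
  set R : ℝ := (1 + r) / 2 with hR_def
  have hrR : r < R := by rw [hR_def]; linarith
  have hR1 : R < 1 := by rw [hR_def]; linarith
  have hR0 : 0 < R := by rw [hR_def]; linarith
  set r2 : ℝ := (r + R) / 2 with hr2_def
  have hr2a : r < r2 := by rw [hr2_def]; linarith
  have hr2b : r2 < R := by rw [hr2_def]; linarith
  have hr20 : 0 < r2 := by linarith
  -- coefficient bounds
  obtain ⟨M, hM0, hM⟩ := aseq_bounded (k := k) (α₀ := α₀) (π₀ := π₀) hk hα hπ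
  have haA : ∀ n, |aseq k α₀ π₀ n| ≤ M := aseq_abs_le hk hα hπ hM
  have haP : ∀ n, |pseq k α₀ π₀ n| ≤ max π₀ (k * M) := pseq_abs_le hk hα hπ hM
  -- the sum functions
  set FA : ℝ → ℝ := fun y => ∑' n, aseq k α₀ π₀ n * y ^ n with hFA_def
  set FP : ℝ → ℝ := fun y => ∑' n, pseq k α₀ π₀ n * y ^ n with hFP_def
  set DA : ℝ → ℝ := fun y => ∑' n, aseq k α₀ π₀ n * ((n : ℝ) * y ^ (n - 1)) with hDA_def
  set DP : ℝ → ℝ := fun y => ∑' n, pseq k α₀ π₀ n * ((n : ℝ) * y ^ (n - 1)) with hDP_def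
  -- summability facts
  have hsumA : ∀ {x : ℝ}, |x| ≤ R → Summable fun n => aseq k α₀ π₀ n * x ^ n :=
    fun hx => summable_pow_of_bounded haA hR1 hx
  have hsumP : ∀ {x : ℝ}, |x| ≤ R → Summable fun n => pseq k α₀ π₀ n * x ^ n :=
    fun hx => summable_pow_of_bounded haP hR1 hx
  have hsumA' : ∀ {x : ℝ}, |x| ≤ R → Summable fun n => aseq k α₀ π₀ n * ((n : ℝ) * x ^ (n - 1)) :=
    fun hx => summable_deriv_pow_of_bounded haA hR0 hR1 hx
  have hsumP' : ∀ {x : ℝ}, |x| ≤ R → Summable fun n => pseq k α₀ π₀ n * ((n : ℝ) * x ^ (n - 1)) :=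
    fun hx => summable_deriv_pow_of_bounded haP hR0 hR1 hx
  -- derivatives of the sums
  have hDFA : ∀ x ∈ Ioo (-R) R, HasDerivAt FA (DA x) x :=
    fun x hx => hasDerivAt_tsum_pow haA hR0 hR1 hx
  have hDFP : ∀ x ∈ Ioo (-R) R, HasDerivAt FP (DP x) x :=
    fun x hx => hasDerivAt_tsum_pow haP hR0 hR1 hx
  -- angles
  set T : ℝ := Real.arcsin R with hT_def
  set T2 : ℝ := Real.arcsin r2 with hT2_def
  have hT0 : 0 < T := Real.arcsin_pos.2 hR0
  have hTpi : T < π / 2 := Real.arcsin_lt_pi_div_two.2 hR1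
  have hT20 : 0 < T2 := Real.arcsin_pos.2 hr20
  have hT2T : T2 < T := by
    rw [hT_def, hT2_def]
    exact Real.strictMonoOn_arcsin ⟨by linarith, by linarith⟩ ⟨by linarith, hR1.le⟩ hr2b
  have hsinT : Real.sin T = R := Real.sin_arcsin (by linarith) hR1.le
  have hcosT : 0 < Real.cos T := Real.cos_pos_of_mem_Ioo ⟨by linarith, hTpi⟩
  -- clamped time and vector field
  set pj : ℝ → ℝ := fun t => max (-T) (min T t) with hpj_def
  have hpj_mem : ∀ t, pj t ∈ Icc (-T) T := by
    intro t
    constructor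
    · exact le_max_left _ _
    · exact max_le (by linarith) (min_le_left _ _)
  have hpj_eq : ∀ t ∈ Icc (-T) T, pj t = t := by
    intro t ht
    rw [hpj_def]
    simp only [min_eq_right ht.2, max_eq_right ht.1]
  have hcospj : ∀ t, Real.cos T ≤ Real.cos (pj t) := by
    intro t
    have h1 := hpj_mem t
    rw [← Real.cos_abs (pj t)]
    apply Real.cos_le_cos_of_nonneg_of_le_pi (abs_nonneg _) (by linarith [Real.pi_pos])
    rw [abs_le]
    exact ⟨h1.1, h1.2⟩
  have hcospj0 : ∀ t, 0 < Real.cos (pj t) := fun t => lt_of_lt_of_le hcosT (hcospj t)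
  set v : ℝ → ℝ × ℝ → ℝ × ℝ := fun t u =>
    ((Real.sin (pj t) * u.1 + k * u.2) / Real.cos (pj t), k * u.1 * Real.cos (pj t)) with hv_def
  set K : NNReal := Real.toNNReal ((1 + k) / Real.cos T + k) with hK_def
  have hKcoe : (K : ℝ) = (1 + k) / Real.cos T + k := by
    rw [hK_def, Real.coe_toNNReal]
    positivity
  have hlip : ∀ t, LipschitzWith K (v t) := by
    intro t
    apply LipschitzWith.of_dist_le_mul
    intro u w
    have hc := hcospj t
    have hc0 := hcospj0 t
    have hc1 : Real.cos (pj t) ≤ 1 := Real.cos_le_one _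
    have hs1 : |Real.sin (pj t)| ≤ 1 := by
      rw [abs_le]; exact ⟨Real.neg_one_le_sin _, Real.sin_le_one _⟩
    set d1 : ℝ := dist u.1 w.1 with hd1
    set d2 : ℝ := dist u.2 w.2 with hd2
    have hd10 : 0 ≤ d1 := dist_nonneg
    have hd20 : 0 ≤ d2 := dist_nonneg
    have hD : dist u w = max d1 d2 := rfl
    have hd1D : d1 ≤ max d1 d2 := le_max_left _ _
    have hd2D : d2 ≤ max d1 d2 := le_max_right _ _
    have hD0 : 0 ≤ max d1 d2 := le_trans hd10 hd1D
    rw [hD, hKcoe, Prod.dist_eq]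
    apply max_le
    · -- first component
      rw [Real.dist_eq]
      have e1 : (Real.sin (pj t) * u.1 + k * u.2) / Real.cos (pj t)
          - (Real.sin (pj t) * w.1 + k * w.2) / Real.cos (pj t)
          = (Real.sin (pj t) * (u.1 - w.1) + k * (u.2 - w.2)) / Real.cos (pj t) := by
        field_simp; ring
      rw [e1, abs_div, abs_of_pos hc0]
      have e2 : |Real.sin (pj t) * (u.1 - w.1) + k * (u.2 - w.2)| ≤ (1 + k) * max d1 d2 := by
        calc |Real.sin (pj t) * (u.1 - w.1) + k * (u.2 - w.2)|
            ≤ |Real.sin (pj t) * (u.1 - w.1)| + |k * (u.2 - w.2)| := abs_add_le _ _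
          _ = |Real.sin (pj t)| * |u.1 - w.1| + |k| * |u.2 - w.2| := by rw [abs_mul, abs_mul]
          _ = |Real.sin (pj t)| * d1 + k * d2 := by
              rw [abs_of_nonneg hk, hd1, hd2, Real.dist_eq, Real.dist_eq]
          _ ≤ 1 * max d1 d2 + k * max d1 d2 := by
              apply add_le_add
              · exact mul_le_mul hs1 hd1D hd10 zero_le_one
              · exact mul_le_mul_of_nonneg_left hd2D hk
          _ = (1 + k) * max d1 d2 := by ring
      calc |Real.sin (pj t) * (u.1 - w.1) + k * (u.2 - w.2)| / Real.cos (pj t)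
          ≤ ((1 + k) * max d1 d2) / Real.cos T := by
            apply div_le_div₀ (by positivity) e2 hcosT hc
        _ = ((1 + k) / Real.cos T) * max d1 d2 := by ring
        _ ≤ ((1 + k) / Real.cos T + k) * max d1 d2 := by nlinarith
    · -- second component
      rw [Real.dist_eq]
      have e1 : k * u.1 * Real.cos (pj t) - k * w.1 * Real.cos (pj t)
          = k * (u.1 - w.1) * Real.cos (pj t) := by ring
      rw [e1, abs_mul, abs_mul, abs_of_nonneg hk, abs_of_pos hc0]
      have habs : |u.1 - w.1| ≤ max d1 d2 := by
        rw [hd1, Real.dist_eq] at hd1D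
        exact hd1D
      calc k * |u.1 - w.1| * Real.cos (pj t) ≤ k * (max d1 d2) * 1 := by
            apply mul_le_mul (mul_le_mul_of_nonneg_left habs hk) hc1 hc0.le (by positivity)
        _ ≤ ((1 + k) / Real.cos T + k) * max d1 d2 := by
            have h9 : 0 ≤ (1 + k) / Real.cos T := by positivity
            nlinarith
  -- solutions
  set f : ℝ → ℝ × ℝ := fun t => (FA (Real.sin t), FP (Real.sin t)) with hf_def
  set g : ℝ → ℝ × ℝ := fun t =>
    ((α₀ * Real.cosh (k * t) + π₀ * Real.sinh (k * t)) / Real.cos t,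
      π₀ * Real.cosh (k * t) + α₀ * Real.sinh (k * t)) with hg_def
  have hsin_mem : ∀ t ∈ Ioo (-T) T, Real.sin t ∈ Ioo (-R) R := by
    intro t ht
    have h1 : Real.sin t < Real.sin T :=
      Real.strictMonoOn_sin ⟨by linarith [ht.1], by linarith [ht.2]⟩
        ⟨by linarith, hTpi.le⟩ ht.2
    have h2 : Real.sin (-T) < Real.sin t :=
      Real.strictMonoOn_sin ⟨by linarith, by linarith⟩
        ⟨by linarith [ht.1], by linarith [ht.2]⟩ ht.1
    rw [Real.sin_neg, hsinT] at h2
    rw [hsinT] at h1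
    exact ⟨h2, h1⟩
  have hfderiv : ∀ t ∈ Ioo (-T) T, HasDerivAt f (v t (f t)) t := by
    intro t ht
    have hmem := hsin_mem t ht
    have habs : |Real.sin t| ≤ R := by rw [abs_le]; exact ⟨hmem.1.le, hmem.2.le⟩
    have hpjt : pj t = t := hpj_eq t ⟨ht.1.le, ht.2.le⟩
    have hcost : 0 < Real.cos t := by rw [← hpjt]; exact hcospj0 t
    have h1 : HasDerivAt (fun s => FA (Real.sin s)) (DA (Real.sin t) * Real.cos t) t :=
      (hDFA _ hmem).comp t (Real.hasDerivAt_sin t)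
    have h2 : HasDerivAt (fun s => FP (Real.sin s)) (DP (Real.sin t) * Real.cos t) t :=
      (hDFP _ hmem).comp t (Real.hasDerivAt_sin t)
    have hrelA := relation_A (k := k) (α₀ := α₀) (π₀ := π₀) hk (x := Real.sin t)
      (hsumA habs) (hsumP habs) (hsumA' habs)
    have hrelP := relation_P (k := k) (α₀ := α₀) (π₀ := π₀) (x := Real.sin t)
      (hsumA habs) (hsumP' habs)
    have hcos2 : Real.cos t ^ 2 = 1 - Real.sin t ^ 2 := Real.cos_sq' t
    have hprod := h1.prodMk h2
    have hval : v t (f t) = (DA (Real.sin t) * Real.cos t, DP (Real.sin t) * Real.cos t) := by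
      rw [hv_def, hf_def]
      simp only [hpjt]
      rw [Prod.ext_iff]
      constructor
      · show (Real.sin t * FA (Real.sin t) + k * FP (Real.sin t)) / Real.cos t
          = DA (Real.sin t) * Real.cos t
        rw [div_eq_iff hcost.ne']
        simp only [hDA_def, hFA_def, hFP_def]
        linear_combination (-1 : ℝ) * hrelA
          - (∑' n, aseq k α₀ π₀ n * ((n : ℝ) * Real.sin t ^ (n - 1))) * hcos2
      · show k * FA (Real.sin t) * Real.cos t = DP (Real.sin t) * Real.cos t
        simp only [hDP_def, hFA_def]
        rw [hrelP]
    rw [hval]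
    exact hprod
  have hgderiv : ∀ t ∈ Ioo (-T) T, HasDerivAt g (v t (g t)) t := by
    intro t ht
    have hpjt : pj t = t := hpj_eq t ⟨ht.1.le, ht.2.le⟩
    have hcost : 0 < Real.cos t := by rw [← hpjt]; exact hcospj0 t
    have hnum : HasDerivAt (fun s => α₀ * Real.cosh (k * s) + π₀ * Real.sinh (k * s))
        (α₀ * (Real.sinh (k * t) * (k * 1)) + π₀ * (Real.cosh (k * t) * (k * 1))) t :=
      ((((hasDerivAt_id t).const_mul k).cosh).const_mul α₀).add
        ((((hasDerivAt_id t).const_mul k).sinh).const_mul π₀)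
    have hden : HasDerivAt Real.cos (-Real.sin t) t := Real.hasDerivAt_cos t
    have hg1 := hnum.div hden hcost.ne'
    have hg2 : HasDerivAt (fun s => π₀ * Real.cosh (k * s) + α₀ * Real.sinh (k * s))
        (π₀ * (Real.sinh (k * t) * (k * 1)) + α₀ * (Real.cosh (k * t) * (k * 1))) t :=
      ((((hasDerivAt_id t).const_mul k).cosh).const_mul π₀).add
        ((((hasDerivAt_id t).const_mul k).sinh).const_mul α₀)
    have hprod := hg1.prodMk hg2
    have hval : v t (g t) =
        (((α₀ * (Real.sinh (k * t) * (k * 1)) + π₀ * (Real.cosh (k * t) * (k * 1))) * Real.cos t -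
          (α₀ * Real.cosh (k * t) + π₀ * Real.sinh (k * t)) * (-Real.sin t)) / Real.cos t ^ 2,
          π₀ * (Real.sinh (k * t) * (k * 1)) + α₀ * (Real.cosh (k * t) * (k * 1))) := by
      rw [hv_def, hg_def]
      simp only [hpjt]
      rw [Prod.ext_iff]
      constructor
      · show (Real.sin t * ((α₀ * Real.cosh (k * t) + π₀ * Real.sinh (k * t)) / Real.cos t) +
            k * (π₀ * Real.cosh (k * t) + α₀ * Real.sinh (k * t))) / Real.cos t = _
        field_simp
        ring
      · show k * ((α₀ * Real.cosh (k * t) + π₀ * Real.sinh (k * t)) / Real.cos t) * Real.cos t = _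
        field_simp
        ring
    rw [hval]
    exact hprod
  have hinit : f 0 = g 0 := by
    have hFA0 : FA 0 = α₀ := by
      rw [hFA_def]
      show (∑' n, aseq k α₀ π₀ n * (0 : ℝ) ^ n) = α₀
      rw [tsum_eq_single 0 (fun b hb => by simp [zero_pow hb])]
      simp [aseq_zero]
    have hFP0 : FP 0 = π₀ := by
      rw [hFP_def]
      show (∑' n, pseq k α₀ π₀ n * (0 : ℝ) ^ n) = π₀
      rw [tsum_eq_single 0 (fun b hb => by simp [zero_pow hb])]
      simp [pseq_zero']
    rw [hf_def, hg_def]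
    simp [Real.sin_zero, hFA0, hFP0]
  have hsub : Icc (-T2) T2 ⊆ Ioo (-T) T := by
    intro t ht
    exact ⟨by linarith [ht.1], by linarith [ht.2]⟩
  have huniq : EqOn f g (Icc (-T2) T2) := by
    apply ODE_solution_unique_of_mem_Icc (v := v) (s := fun _ => univ) (K := K)
      (fun t _ => (hlip t).lipschitzOnWith)
      (⟨by linarith, hT20⟩ : (0 : ℝ) ∈ Ioo (-T2) T2)
    · exact continuousOn_of_forall_continuousAt
        (fun t ht => (hfderiv t (hsub ht)).continuousAt)
    · exact fun t ht => hfderiv t (hsub (Ioo_subset_Icc_self ht))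
    · exact fun t _ => mem_univ _
    · exact continuousOn_of_forall_continuousAt
        (fun t ht => (hgderiv t (hsub ht)).continuousAt)
    · exact fun t ht => hgderiv t (hsub (Ioo_subset_Icc_self ht))
    · exact fun t _ => mem_univ _
    · exact hinit
  -- conclude
  intro x hx
  have hx1 : |x| ≤ r := abs_le.2 ⟨hx.1, hx.2⟩
  have hxR : |x| ≤ R := le_trans hx1 (by linarith)
  have hxm1 : (-1 : ℝ) ≤ x := by linarith [hx.1]
  have hxp1 : x ≤ 1 := by linarith [hx.2]
  have ht2 : Real.arcsin x ∈ Icc (-T2) T2 := by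
    constructor
    · have h := Real.monotone_arcsin (show -r2 ≤ x by linarith [hx.1])
      rwa [Real.arcsin_neg, ← hT2_def] at h
    · rw [hT2_def]; exact Real.monotone_arcsin (by linarith [hx.2])
  have heq := huniq ht2
  have h1 := congrArg Prod.fst heq
  simp only [hf_def, hg_def] at h1
  rw [Real.sin_arcsin hxm1 hxp1, Real.cos_arcsin] at h1
  rw [← h1]
  simpa [hFA_def] using (hsumA hxR).hasSum

end Stmt12Aux

/-- For `m > 0` and `k ≥ 0` there are sequences of nonnegative coefficients giving
absolutely convergent power-series expansions on `[−1,1]` of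
`sinh(k·arcsin(y/(m+1)))/√(1−(y/(m+1))²)` and `cosh(k·arcsin(y/(m+1)))/√(1−(y/(m+1))²)`. -/
theorem stmt12 (m k : ℝ) (hm : 0 < m) (hk : 0 ≤ k) :
    ∃ a b : ℕ → ℝ, (∀ n, 0 ≤ a n) ∧ (∀ n, 0 ≤ b n) ∧
      ∀ y ∈ Set.Icc (-1 : ℝ) 1,
        Summable (fun n : ℕ => a n * |y| ^ n) ∧
        Summable (fun n : ℕ => b n * |y| ^ n) ∧
        (∑' n : ℕ, a n * y ^ n) =
          Real.sinh (k * Real.arcsin (y / (m + 1))) / Real.sqrt (1 - (y / (m + 1)) ^ 2) ∧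
        (∑' n : ℕ, b n * y ^ n) =
          Real.cosh (k * Real.arcsin (y / (m + 1))) / Real.sqrt (1 - (y / (m + 1)) ^ 2) := by
  have hm1 : (0 : ℝ) < m + 1 := by linarith
  set r : ℝ := 1 / (m + 1) with hr_def
  have hr0 : 0 < r := by positivity
  have hr1 : r < 1 := by rw [hr_def, div_lt_one hm1]; linarith
  have hA := Stmt12Aux.main k 0 1 r hk le_rfl zero_le_one hr0 hr1
  have hB := Stmt12Aux.main k 1 0 r hk zero_le_one le_rfl hr0 hr1
  refine ⟨fun n => Stmt12Aux.aseq k 0 1 n / (m + 1) ^ n,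
    fun n => Stmt12Aux.aseq k 1 0 n / (m + 1) ^ n, ?_, ?_, ?_⟩
  · intro n
    have h := Stmt12Aux.aseq_nonneg (k := k) (α₀ := 0) (π₀ := 1) hk le_rfl zero_le_one n
    positivity
  · intro n
    have h := Stmt12Aux.aseq_nonneg (k := k) (α₀ := 1) (π₀ := 0) hk zero_le_one le_rfl n
    positivity
  · intro y hy
    have hy1 : |y| ≤ 1 := abs_le.2 ⟨hy.1, hy.2⟩
    set x : ℝ := y / (m + 1) with hx_def
    have hx_abs : |x| = |y| / (m + 1) := by
      rw [hx_def, abs_div, abs_of_pos hm1]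
    have hxr : |x| ≤ r := by
      rw [hx_abs, hr_def]
      gcongr
    have hx_mem : x ∈ Set.Icc (-r) r := by
      rw [Set.mem_Icc]
      exact abs_le.1 hxr
    have hax_mem : |x| ∈ Set.Icc (-r) r := ⟨by linarith [abs_nonneg x], hxr⟩
    have hsum1 := hA x hx_mem
    have hsum2 := hB x hx_mem
    have key1 : ∀ n : ℕ, Stmt12Aux.aseq k 0 1 n / (m + 1) ^ n * y ^ n
        = Stmt12Aux.aseq k 0 1 n * x ^ n := by
      intro n; rw [hx_def, div_pow]; ring
    have key2 : ∀ n : ℕ, Stmt12Aux.aseq k 1 0 n / (m + 1) ^ n * y ^ n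
        = Stmt12Aux.aseq k 1 0 n * x ^ n := by
      intro n; rw [hx_def, div_pow]; ring
    have keyabs1 : ∀ n : ℕ, Stmt12Aux.aseq k 0 1 n * |x| ^ n
        = Stmt12Aux.aseq k 0 1 n / (m + 1) ^ n * |y| ^ n := by
      intro n; rw [hx_abs, div_pow]; ring
    have keyabs2 : ∀ n : ℕ, Stmt12Aux.aseq k 1 0 n * |x| ^ n
        = Stmt12Aux.aseq k 1 0 n / (m + 1) ^ n * |y| ^ n := by
      intro n; rw [hx_abs, div_pow]; ring
    refine ⟨?_, ?_, ?_, ?_⟩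
    · exact ((hA |x| hax_mem).summable).congr keyabs1
    · exact ((hB |x| hax_mem).summable).congr keyabs2
    · rw [tsum_congr key1, hsum1.tsum_eq]
      rw [zero_mul, one_mul, zero_add]
    · rw [tsum_congr key2, hsum2.tsum_eq]
      rw [zero_mul, one_mul, add_zero]
end

section
/- For real numbers 0 < a < b, the function k ↦ sinh(ak)/sinh(bk) is strictly decreasing on (0, ∞). -/
open Real Set

/-- `sinh t * cosh t > t` for `t > 0`. -/
lemma aux_sinh_cosh_gt (t : ℝ) (ht : 0 < t) : t < Real.sinh t * Real.cosh t := by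
  have h := Real.self_lt_sinh_iff.2 (by linarith : 0 < 2 * t)
  rw [Real.sinh_two_mul] at h
  linarith

/-- `t ↦ t * cosh t / sinh t` is strictly monotone on `(0, ∞)`. -/
lemma aux_mono : StrictMonoOn (fun t : ℝ => t * Real.cosh t / Real.sinh t) (Set.Ioi 0) := by
  apply strictMonoOn_of_deriv_pos (convex_Ioi 0)
  · apply ContinuousOn.div
    · fun_prop
    · fun_prop
    · intro t ht
      exact ne_of_gt (Real.sinh_pos_iff.2 ht)
  · intro t ht
    rw [interior_Ioi] at ht
    have hts : 0 < Real.sinh t := Real.sinh_pos_iff.2 ht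
    have h1 : HasDerivAt (fun t : ℝ => t * Real.cosh t) (1 * Real.cosh t + t * Real.sinh t) t :=
      (hasDerivAt_id t).mul (Real.hasDerivAt_cosh t)
    have h2 : HasDerivAt (fun t : ℝ => t * Real.cosh t / Real.sinh t)
        (((1 * Real.cosh t + t * Real.sinh t) * Real.sinh t - t * Real.cosh t * Real.cosh t) /
          Real.sinh t ^ 2) t := h1.div (Real.hasDerivAt_sinh t) (ne_of_gt hts)
    rw [h2.deriv]
    apply div_pos _ (by positivity)
    have hsq : Real.cosh t ^ 2 - Real.sinh t ^ 2 = 1 := Real.cosh_sq_sub_sinh_sq t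
    have h5 : t * Real.cosh t ^ 2 - t * Real.sinh t ^ 2 = t := by
      rw [← mul_sub, hsq, mul_one]
    have := aux_sinh_cosh_gt t ht
    nlinarith [this, h5]

/-- For `0 < a < b`, the function `k ↦ sinh(ak)/sinh(bk)` is strictly decreasing on `(0,∞)`. -/
theorem stmt14 (a b : ℝ) (ha : 0 < a) (hab : a < b) :
    StrictAntiOn (fun k : ℝ => Real.sinh (a * k) / Real.sinh (b * k)) (Set.Ioi 0) := by
  have hb : 0 < b := lt_trans ha hab
  apply strictAntiOn_of_deriv_neg (convex_Ioi 0)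
  · apply ContinuousOn.div
    · fun_prop
    · fun_prop
    · intro t ht
      exact ne_of_gt (Real.sinh_pos_iff.2 (mul_pos hb ht))
  · intro x hx
    rw [interior_Ioi] at hx
    rw [Set.mem_Ioi] at hx
    have hax : 0 < a * x := mul_pos ha hx
    have hbx : 0 < b * x := mul_pos hb hx
    have hsa : 0 < Real.sinh (a * x) := Real.sinh_pos_iff.2 hax
    have hsb : 0 < Real.sinh (b * x) := Real.sinh_pos_iff.2 hbx
    have h1 : HasDerivAt (fun k : ℝ => Real.sinh (a * k)) (Real.cosh (a * x) * a) x := by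
      have := (Real.hasDerivAt_sinh (a * x)).comp x ((hasDerivAt_id x).const_mul a)
      simpa [Function.comp_def] using this
    have h2 : HasDerivAt (fun k : ℝ => Real.sinh (b * k)) (Real.cosh (b * x) * b) x := by
      have := (Real.hasDerivAt_sinh (b * x)).comp x ((hasDerivAt_id x).const_mul b)
      simpa [Function.comp_def] using this
    have h3 := h1.div h2 (ne_of_gt hsb)
    rw [HasDerivAt.deriv (f := fun k : ℝ => Real.sinh (a * k) / Real.sinh (b * k)) h3]
    apply div_neg_of_neg_of_pos _ (by positivity)
    -- key inequality from monotonicity of t * cosh t / sinh t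
    have key := aux_mono (Set.mem_Ioi.2 hax) (Set.mem_Ioi.2 hbx)
      (by nlinarith : a * x < b * x)
    rw [div_lt_div_iff₀ hsa hsb] at key
    have hcancel : a * Real.cosh (a * x) * Real.sinh (b * x)
        < b * Real.cosh (b * x) * Real.sinh (a * x) := by
      nlinarith [key, hx]
    nlinarith [hcancel]
end

section
/- For every m > 0, ∫₀^1 y·arcsin(y/(m+1))/√(1 − (y/(m+1))²) dy = (m+1)·(1 − √(m(m+2))·arcsin(1/(m+1))). -/
/-- `∫₀¹ y·arcsin(y/(m+1))/√(1−(y/(m+1))²) dy = (m+1)(1 − √(m(m+2))·arcsin(1/(m+1)))`. -/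
theorem stmt15 (m : ℝ) (hm : 0 < m) :
    (∫ y in (0 : ℝ)..(1 : ℝ),
        y * Real.arcsin (y / (m + 1)) / Real.sqrt (1 - (y / (m + 1)) ^ 2)) =
      (m + 1) * (1 - Real.sqrt (m * (m + 2)) * Real.arcsin (1 / (m + 1))) := by
  set a := m + 1 with ha_def
  have ha : 1 < a := by simp [ha_def]; linarith
  have ha0 : 0 < a := by linarith
  -- positivity of 1 - (y/a)^2 for y ∈ [0,1]
  have hpos : ∀ y ∈ Set.uIcc (0:ℝ) 1, 0 < 1 - (y / a) ^ 2 := by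
    intro y hy
    rw [Set.uIcc_of_le (by norm_num)] at hy
    obtain ⟨h0, h1⟩ := hy
    have h2 : y / a < 1 := by
      rw [div_lt_one ha0]; linarith
    have h3 : 0 ≤ y / a := div_nonneg h0 ha0.le
    nlinarith
  have key : ∀ y ∈ Set.uIcc (0:ℝ) 1,
      HasDerivAt (fun y => a * y - a ^ 2 * (Real.sqrt (1 - (y / a) ^ 2) * Real.arcsin (y / a)))
        (y * Real.arcsin (y / a) / Real.sqrt (1 - (y / a) ^ 2)) y := by
    intro y hy
    have hp := hpos y hy
    have hs : 0 < Real.sqrt (1 - (y / a) ^ 2) := Real.sqrt_pos.2 hp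
    have hu1 : y / a ≠ 1 := by
      intro h; rw [h] at hp; norm_num at hp
    have hu2 : y / a ≠ -1 := by
      intro h; rw [h] at hp; norm_num at hp
    have hdiv : HasDerivAt (fun y : ℝ => y / a) (1 / a) y := by
      simpa using (hasDerivAt_id y).div_const a
    have h2 : HasDerivAt (fun y : ℝ => 1 - (y / a) ^ 2)
        (-(2 * (y / a) ^ 1 * (1 / a))) y := by
      simpa using ((hdiv.pow 2).const_sub 1)
    have h3 : HasDerivAt (fun y : ℝ => Real.sqrt (1 - (y / a) ^ 2))
        ((-(2 * (y / a) ^ 1 * (1 / a))) / (2 * Real.sqrt (1 - (y / a) ^ 2))) y :=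
      h2.sqrt (ne_of_gt hp)
    have h4 : HasDerivAt (fun y : ℝ => Real.arcsin (y / a))
        ((1 / Real.sqrt (1 - (y / a) ^ 2)) * (1 / a)) y :=
      by have := (Real.hasDerivAt_arcsin hu2 hu1).comp y hdiv; exact this
    have h5 := ((hasDerivAt_id y).const_mul a).sub
      (((h3.mul h4).const_mul (a ^ 2)))
    refine h5.congr_deriv ?_
    have hq : Real.sqrt (1 - (y / a) ^ 2) ^ 2 = 1 - (y / a) ^ 2 :=
      Real.sq_sqrt hp.le
    set s := Real.sqrt (1 - (y / a) ^ 2) with hs_def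
    have hss : s ^ 2 * a ^ 2 = a ^ 2 - y ^ 2 := by
      rw [hq]; field_simp
    field_simp
    ring_nf
  have hint : IntervalIntegrable
      (fun y => y * Real.arcsin (y / a) / Real.sqrt (1 - (y / a) ^ 2))
      MeasureTheory.volume 0 1 := by
    apply ContinuousOn.intervalIntegrable
    apply ContinuousOn.div
    · exact (continuous_id.mul (Real.continuous_arcsin.comp (continuous_id.div_const a))).continuousOn
    · exact (Real.continuous_sqrt.comp (by continuity)).continuousOn
    · intro y hy
      exact ne_of_gt (Real.sqrt_pos.2 (hpos y hy))
  rw [intervalIntegral.integral_eq_sub_of_hasDerivAt key hint]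
  have e1 : Real.sqrt (1 - ((1:ℝ) / a) ^ 2) = Real.sqrt (m * (m + 2)) / a := by
    rw [show 1 - ((1:ℝ)/a)^2 = m * (m + 2) / a ^ 2 by field_simp [ha_def]; ring]
    rw [Real.sqrt_div (by nlinarith : (0:ℝ) ≤ m * (m+2))]
    rw [Real.sqrt_sq ha0.le]
  simp only [zero_div, Real.arcsin_zero, mul_zero, sub_zero, mul_one, mul_zero, sub_zero]
  rw [e1]
  field_simp
end
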